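/- Let R be a Noetherian ring of prime characteristic p, x_1,...,x_d a regular sequence, J_1 ⊆ R an ideal, and suppose c r^{p^e}(x_1 ⋯ x_d)^{s p^e} ∈ (x_1^{(t+s-1)p^e} J_1^{[p^e]}, x_2^{(t+s)p^e}, ..., x_d^{(t+s)p^e}). Then c r^{p^e} (x_2 ⋯ x_d)^{s p^e} ∈ (x_1^{(t-1)p^e} J_1^{[p^e]}, x_2^{(t+s)p^e}, ..., x_d^{(t+s)p^e}). -/

import Mathlib

noncomputable section

section ColonRegularAux

variable {R : Type} [CommRing R]

/-- Colon-regularity of a list of elements relative to a base ideal: each element is a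
nonzerodivisor modulo the base ideal together with the previous elements. -/
def ColReg (I : Ideal R) : List R → Prop
  | [] => True
  | a :: t => (∀ z, a * z ∈ I → z ∈ I) ∧ ColReg (I ⊔ Ideal.span {a}) t

lemma ColReg.congr_ideal {I J : Ideal R} {l : List R} (h : ColReg I l) (e : I = J) :
    ColReg J l := e ▸ h

lemma ColReg.append : ∀ (s t : List R) (I : Ideal R), ColReg I (s ++ t) →
    ColReg I s ∧ ColReg (I ⊔ Ideal.ofList s) t
  | [], t, I, h => ⟨trivial, by simpa using h⟩
  | a :: s, t, I, h => by
    obtain ⟨h1, h2⟩ := h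
    obtain ⟨h3, h4⟩ := ColReg.append s t _ h2
    exact ⟨⟨h1, h3⟩, h4.congr_ideal (by rw [Ideal.ofList_cons, sup_assoc])⟩

lemma isSMulRegular_quot_colon {J : Ideal R} {r : R}
    (h : IsSMulRegular (R ⧸ (J • ⊤ : Submodule R R)) r) {z : R} (hz : r * z ∈ J) : z ∈ J := by
  have e : (J • ⊤ : Submodule R R) = J := by rw [smul_eq_mul, Ideal.mul_top]
  have h0 : r • (Submodule.Quotient.mk z : R ⧸ (J • ⊤ : Submodule R R)) = r • (0 : _) := by
    rw [smul_zero, ← Submodule.Quotient.mk_smul, Submodule.Quotient.mk_eq_zero, e]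
    exact hz
  have h1 := h h0
  rwa [Submodule.Quotient.mk_eq_zero, e] at h1

/-- A weakly regular sequence is colon-regular. -/
lemma ColReg.of_isWeaklyRegular : ∀ (t pre : List R),
    RingTheory.Sequence.IsWeaklyRegular R (pre ++ t) → ColReg (Ideal.ofList pre) t
  | [], _, _ => trivial
  | a :: t, pre, h => by
    constructor
    · intro z hz
      have hlt : pre.length < (pre ++ a :: t).length := by simp
      have hr := h.regular_mod_prev pre.length hlt
      have e1 : (pre ++ a :: t).take pre.length = pre := List.take_left
      have e2 : (pre ++ a :: t)[pre.length] = a := by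
        rw [List.getElem_append_right (Nat.le_refl _)]; simp
      rw [e1, e2] at hr
      exact isSMulRegular_quot_colon hr hz
    · have hb := ColReg.of_isWeaklyRegular t (pre ++ [a])
        (by rwa [List.append_assoc, List.singleton_append])
      exact hb.congr_ideal (by rw [Ideal.ofList_append, Ideal.ofList_singleton])

lemma colon_pow {I : Ideal R} {a : R} (h : ∀ z, a * z ∈ I → z ∈ I) :
    ∀ n, ∀ z, a ^ n * z ∈ I → z ∈ I
  | 0, z, hz => by simpa using hz
  | n + 1, z, hz =>
    colon_pow h n z (h (a ^ n * z) (by rw [← mul_assoc, ← pow_succ']; exact hz))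

lemma mem_sup_span {K : Ideal R} {g u : R} (h : u ∈ K ⊔ Ideal.span {g}) :
    ∃ k ∈ K, ∃ v : R, u = k + v * g := by
  obtain ⟨k, hk, w, hw, he⟩ := Submodule.mem_sup.mp h
  obtain ⟨v, hv⟩ := Ideal.mem_span_singleton'.mp hw
  exact ⟨k, hk, v, by rw [← he, hv]⟩

lemma coef_mul_mem_span {g : R} (v : R) : v * g ∈ Ideal.span {g} :=
  Ideal.mul_mem_left _ v (Ideal.mem_span_singleton_self g)

/-- The key step: if `t` is colon-regular modulo `K + (a^m)` and modulo `K + (a)`, and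
multiplication by `a` is "injective" from `K + (a^m)` to `K + (a^(m+1))`, then `t` is
colon-regular modulo `K + (a^(m+1))`. -/
lemma colreg_step (a : R) (m : ℕ) : ∀ (t : List R) (K : Ideal R),
    (∀ y, a * y ∈ K ⊔ Ideal.span {a ^ (m + 1)} → y ∈ K ⊔ Ideal.span {a ^ m}) →
    ColReg (K ⊔ Ideal.span {a ^ m}) t → ColReg (K ⊔ Ideal.span {a}) t →
    ColReg (K ⊔ Ideal.span {a ^ (m + 1)}) t
  | [], _, _, _, _ => trivial
  | b :: t, K, hinj, hm, h1 => by
    obtain ⟨hm1, hm2⟩ := hm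
    obtain ⟨h11, h12⟩ := h1
    have hspan : Ideal.span {a ^ (m + 1)} ≤ Ideal.span {a} :=
      Ideal.span_singleton_le_span_singleton.mpr (dvd_pow_self a (Nat.succ_ne_zero m))
    constructor
    · intro z hz
      have hz1 : z ∈ K ⊔ Ideal.span {a} :=
        h11 z ((sup_le_sup_left hspan K) hz)
      obtain ⟨k, hk, u, hzu⟩ := mem_sup_span hz1
      have habu : a * (b * u) ∈ K ⊔ Ideal.span {a ^ (m + 1)} := by
        have he : a * (b * u) = b * z - b * k := by rw [hzu]; ring
        rw [he]
        exact sub_mem hz (Submodule.mem_sup_left (K.mul_mem_left b hk))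
      obtain ⟨k', hk', v, hu'⟩ := mem_sup_span (hm1 u (hinj (b * u) habu))
      have he : z = (k + k' * a) + v * a ^ (m + 1) := by rw [hzu, hu']; ring
      rw [he]
      exact add_mem (Submodule.mem_sup_left (add_mem hk (K.mul_mem_right a hk')))
        (Submodule.mem_sup_right (coef_mul_mem_span v))
    · have key2 : ∀ y, a * y ∈ (K ⊔ Ideal.span {b}) ⊔ Ideal.span {a ^ (m + 1)} →
          y ∈ (K ⊔ Ideal.span {b}) ⊔ Ideal.span {a ^ m} := by
        intro y hy
        obtain ⟨u1, hu1, u, he1⟩ := mem_sup_span hy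
        obtain ⟨k, hk, w, he2⟩ := mem_sup_span hu1
        have hwb : b * w ∈ K ⊔ Ideal.span {a} := by
          have he : b * w = a * y - k - u * a ^ (m + 1) := by
            linear_combination -he1 - he2
          rw [he]
          refine sub_mem (sub_mem (Submodule.mem_sup_right ?_) (Submodule.mem_sup_left hk))
            (Submodule.mem_sup_right (hspan (coef_mul_mem_span u)))
          exact Ideal.mem_span_singleton'.mpr ⟨y, mul_comm y a⟩
        obtain ⟨κ, hκ, τ, hw⟩ := mem_sup_span (h11 w hwb)
        have haK : a * (y - τ * b - u * a ^ m) ∈ K ⊔ Ideal.span {a ^ (m + 1)} := by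
          have he : a * (y - τ * b - u * a ^ m) = k + κ * b := by
            linear_combination he1 + he2 + b * hw
          rw [he]
          exact Submodule.mem_sup_left (add_mem hk (K.mul_mem_right b hκ))
        have hy' := hinj _ haK
        have he : y = (y - τ * b - u * a ^ m) + τ * b + u * a ^ m := by ring
        rw [he]
        have hle : K ⊔ Ideal.span {a ^ m} ≤ (K ⊔ Ideal.span {b}) ⊔ Ideal.span {a ^ m} :=
          sup_le_sup_right le_sup_left _
        refine add_mem (add_mem (hle hy') ?_)
          (Submodule.mem_sup_right (coef_mul_mem_span u))
        exact Submodule.mem_sup_left (Submodule.mem_sup_right (coef_mul_mem_span τ))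
      have hrec := colreg_step a m t (K ⊔ Ideal.span {b}) key2
        (hm2.congr_ideal (sup_right_comm _ _ _)) (h12.congr_ideal (sup_right_comm _ _ _))
      exact hrec.congr_ideal (sup_right_comm _ _ _)

lemma colreg_tail_pow (a : R) : ∀ (m : ℕ) (t : List R) (I : Ideal R),
    ColReg I (a :: t) → ColReg (I ⊔ Ideal.span {a ^ (m + 1)}) t
  | 0, t, I, h => h.2.congr_ideal (by norm_num)
  | m + 1, t, I, h => by
    refine colreg_step a (m + 1) t I ?_ (colreg_tail_pow a m t I h) (h.2)
    intro y hy
    obtain ⟨i, hi, u, he⟩ := mem_sup_span hy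
    have hik : a * (y - u * a ^ (m + 1)) ∈ I := by
      have he' : a * (y - u * a ^ (m + 1)) = i := by linear_combination he
      rw [he']; exact hi
    have hmem := h.1 _ hik
    have he2 : y = (y - u * a ^ (m + 1)) + u * a ^ (m + 1) := by ring
    rw [he2]
    exact add_mem (Submodule.mem_sup_left hmem) (Submodule.mem_sup_right (coef_mul_mem_span u))

/-- Positive powers of a colon-regular sequence are colon-regular. -/
lemma colreg_pow : ∀ (n : ℕ) (f : Fin n → R) (E : Fin n → ℕ) (I : Ideal R),
    (∀ i, 1 ≤ E i) → ColReg I (List.ofFn f) →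
    ColReg I (List.ofFn fun i => f i ^ E i)
  | 0, _, _, _, _, _ => by rw [List.ofFn_zero]; trivial
  | n + 1, f, E, I, hE, h => by
    rw [List.ofFn_succ] at h ⊢
    obtain ⟨h1, h2⟩ := h
    refine ⟨fun z hz => colon_pow h1 _ z hz, ?_⟩
    obtain ⟨m, hm⟩ : ∃ m, E 0 = m + 1 := ⟨E 0 - 1, by have := hE 0; omega⟩
    have ht : ColReg (I ⊔ Ideal.span {f 0 ^ E 0}) (List.ofFn fun i : Fin n => f i.succ) := by
      rw [hm]; exact colreg_tail_pow (f 0) m _ I ⟨h1, h2⟩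
    exact colreg_pow n (fun i => f i.succ) (fun i => E i.succ) _ (fun i => hE i.succ) ht

/-- Relations among a colon-regular sequence are trivial (Koszul `H₁ = 0` by hand). -/
lemma rel_trivial : ∀ (n : ℕ) (f : Fin n → R), ColReg ⊥ (List.ofFn f) →
    ∀ a : Fin n → R, (∑ i, a i * f i) = 0 →
    ∃ c : Fin n → Fin n → R, (∀ i, c i i = 0) ∧ ∀ i, a i = ∑ j, c i j * f j
  | 0, _, _, a, _ => ⟨fun _ _ => 0, fun i => i.elim0, fun i => i.elim0⟩
  | n + 1, f, h, a, hsum => by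
    have hsplit : List.ofFn f =
        List.ofFn (fun i : Fin n => f i.castSucc) ++ [f (Fin.last n)] := by
      rw [List.ofFn_succ', List.concat_eq_append]
    rw [hsplit] at h
    obtain ⟨hpre, htail⟩ := ColReg.append _ _ _ h
    have eo : Ideal.ofList (List.ofFn fun i : Fin n => f i.castSucc) =
        Ideal.span (Set.range fun i : Fin n => f i.castSucc) :=
      congrArg Ideal.span (Set.ext fun x => List.mem_ofFn)
    have hlast : ∀ z, f (Fin.last n) * z ∈ Ideal.span (Set.range fun i : Fin n => f i.castSucc) →
        z ∈ Ideal.span (Set.range fun i : Fin n => f i.castSucc) := by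
      intro z hz
      have := htail.1 z (by rw [bot_sup_eq, eo]; exact hz)
      rwa [bot_sup_eq, eo] at this
    have hmem : f (Fin.last n) * a (Fin.last n) ∈
        Ideal.span (Set.range fun i : Fin n => f i.castSucc) := by
      have he : f (Fin.last n) * a (Fin.last n) =
          -∑ i : Fin n, a i.castSucc * f i.castSucc := by
        rw [Fin.sum_univ_castSucc] at hsum
        linear_combination hsum
      rw [he]
      exact neg_mem (Ideal.sum_mem _ fun i _ =>
        Ideal.mul_mem_left _ _ (Ideal.subset_span ⟨i, rfl⟩))
    obtain ⟨cc, hcc⟩ := Ideal.mem_span_range_iff_exists_fun.mp (hlast _ hmem)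
    set a' : Fin n → R := fun (i : Fin n) => a i.castSucc + cc i * f (Fin.last n) with ha'
    have hsum' : ∑ i : Fin n, a' i * f i.castSucc = 0 := by
      have : ∑ i : Fin n, a' i * f i.castSucc =
          (∑ i : Fin n, a i.castSucc * f i.castSucc) +
            (∑ i : Fin n, cc i * f i.castSucc) * f (Fin.last n) := by
        rw [Finset.sum_mul, ← Finset.sum_add_distrib]
        exact Finset.sum_congr rfl fun i _ => by rw [ha']; ring
      rw [this, hcc]
      rw [Fin.sum_univ_castSucc] at hsum
      linear_combination hsum
    obtain ⟨c', hdiag', hrow'⟩ := rel_trivial n (fun i => f i.castSucc) hpre a' hsum'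
    refine ⟨Fin.lastCases (Fin.lastCases 0 cc)
      (fun i' => Fin.lastCases (-cc i') (fun j' => c' i' j')), ?_, ?_⟩
    · intro i
      refine Fin.lastCases ?_ (fun i' => ?_) i
      · simp
      · simp [hdiag' i']
    · intro i
      refine Fin.lastCases ?_ (fun i' => ?_) i
      · rw [Fin.sum_univ_castSucc]
        simp [hcc]
      · rw [Fin.sum_univ_castSucc]
        simp only [Fin.lastCases_castSucc, Fin.lastCases_last]
        have := hrow' i'
        rw [ha'] at this
        linear_combination this

end ColonRegularAux

/-- Cancellation of powers of `x₁` along a regular sequence, in a ring of prime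
characteristic `p`: if `c·r^{p^e}·(x₁⋯x_d)^{s p^e}` lies in
`(x₁^{(t+s-1)p^e}·J₁^{[p^e]}, x₂^{(t+s)p^e}, …, x_d^{(t+s)p^e})`, then
`c·r^{p^e}·(x₂⋯x_d)^{s p^e}` lies in
`(x₁^{(t-1)p^e}·J₁^{[p^e]}, x₂^{(t+s)p^e}, …, x_d^{(t+s)p^e})`. -/
theorem frobenius_colon_cancellation {R : Type} [CommRing R] [IsNoetherianRing R]
    (p : ℕ) [Fact p.Prime] [CharP R p] {d : ℕ} (x : Fin (d + 1) → R)
    (hreg : RingTheory.Sequence.IsRegular R (List.ofFn x))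
    (J₁ : Ideal R) (c r : R) (e s t : ℕ) (ht : 1 ≤ t)
    (h : c * r ^ (p ^ e) * (∏ i, x i) ^ (s * p ^ e) ∈
      Ideal.span {x 0 ^ ((t + s - 1) * p ^ e)} *
          Ideal.span ((fun a => a ^ (p ^ e)) '' (J₁ : Set R)) ⊔
        Ideal.span (Set.range fun i : Fin d => x i.succ ^ ((t + s) * p ^ e))) :
    c * r ^ (p ^ e) * (∏ i : Fin d, x i.succ) ^ (s * p ^ e) ∈
      Ideal.span {x 0 ^ ((t - 1) * p ^ e)} *
          Ideal.span ((fun a => a ^ (p ^ e)) '' (J₁ : Set R)) ⊔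
        Ideal.span (Set.range fun i : Fin d => x i.succ ^ ((t + s) * p ^ e)) := by
  rcases Nat.eq_zero_or_pos s with hs | hs
  · subst hs
    simpa using h
  -- main case `1 ≤ s`
  have hpe : 1 ≤ p ^ e := Nat.one_le_pow _ _ (Fact.out : p.Prime).pos
  -- the powered sequence is colon-regular
  set E : Fin (d + 1) → ℕ := fun i => if i = 0 then s * p ^ e else (t + s) * p ^ e with hEdef
  have hE : ∀ i, 1 ≤ E i := by
    intro i
    rw [hEdef]
    dsimp only
    split <;> exact Nat.one_le_iff_ne_zero.mpr (Nat.mul_ne_zero (by omega) (by omega))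
  have hcolx : ColReg ⊥ (List.ofFn x) := by
    have := ColReg.of_isWeaklyRegular (List.ofFn x) []
      (by rw [List.nil_append]; exact hreg.toIsWeaklyRegular)
    exact this.congr_ideal Ideal.ofList_nil
  have hcoly : ColReg ⊥ (List.ofFn fun i => x i ^ E i) :=
    colreg_pow (d + 1) x E ⊥ hE hcolx
  set y : Fin (d + 1) → R := fun i => x i ^ E i with hydef
  have hy0 : y 0 = x 0 ^ (s * p ^ e) := by simp [hydef, hEdef]
  have hys : ∀ i : Fin d, y i.succ = x i.succ ^ ((t + s) * p ^ e) := fun i => by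
    simp [hydef, hEdef, Fin.succ_ne_zero i]
  -- the colon fact: x 0 ^ (s * p^e) is a nonzerodivisor mod P
  have CF : ∀ z, x 0 ^ (s * p ^ e) * z ∈
      Ideal.span (Set.range fun i : Fin d => x i.succ ^ ((t + s) * p ^ e)) →
      z ∈ Ideal.span (Set.range fun i : Fin d => x i.succ ^ ((t + s) * p ^ e)) := by
    intro z hz
    obtain ⟨b, hb⟩ := Ideal.mem_span_range_iff_exists_fun.mp hz
    set A : Fin (d + 1) → R := Fin.cases z (fun i => -(b i)) with hAdef
    have hsum : ∑ i, A i * y i = 0 := by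
      rw [Fin.sum_univ_succ]
      have e1 : ∀ i : Fin d, A i.succ * y i.succ = -(b i * (x i.succ ^ ((t + s) * p ^ e))) := by
        intro i
        rw [hAdef, hys i]
        simp
      rw [Finset.sum_congr rfl fun i _ => e1 i, Finset.sum_neg_distrib, hb]
      have e0 : A 0 = z := by rw [hAdef]; simp
      rw [e0, hy0]
      ring
    obtain ⟨C, hCdiag, hCrow⟩ := rel_trivial (d + 1) y hcoly A hsum
    have hz0 : z = ∑ j, C 0 j * y j := by
      have := hCrow 0
      rwa [show A 0 = z from by rw [hAdef]; simp] at this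
    rw [hz0, Fin.sum_univ_succ, hCdiag 0, zero_mul, zero_add]
    exact Ideal.sum_mem _ fun i _ =>
      Ideal.mul_mem_left _ _ (by rw [hys i]; exact Ideal.subset_span ⟨i, rfl⟩)
  -- decompose the hypothesis
  obtain ⟨q, hq, w, hw, heq⟩ := Submodule.mem_sup.mp h
  obtain ⟨j, hj, hgj⟩ := Ideal.mem_span_singleton_mul.mp hq
  have Epow : x 0 ^ ((t + s - 1) * p ^ e) = x 0 ^ (s * p ^ e) * x 0 ^ ((t - 1) * p ^ e) := by
    have harith : (t + s - 1) * p ^ e = s * p ^ e + (t - 1) * p ^ e := by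
      have : t + s - 1 = s + (t - 1) := by omega
      rw [this, Nat.add_mul]
    rw [harith, pow_add]
  rw [Epow] at hgj
  have heq' : q + w = c * r ^ p ^ e *
      (x 0 ^ (s * p ^ e) * (∏ i : Fin d, x i.succ) ^ (s * p ^ e)) := by
    rw [heq, Fin.prod_univ_succ, mul_pow]
  have hxz : x 0 ^ (s * p ^ e) *
      (c * r ^ p ^ e * (∏ i : Fin d, x i.succ) ^ (s * p ^ e) - x 0 ^ ((t - 1) * p ^ e) * j)
      = w := by
    linear_combination -heq' - hgj
  have hzP := CF _ (hxz ▸ hw)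
  have hfinal : c * r ^ p ^ e * (∏ i : Fin d, x i.succ) ^ (s * p ^ e) =
      x 0 ^ ((t - 1) * p ^ e) * j +
        (c * r ^ p ^ e * (∏ i : Fin d, x i.succ) ^ (s * p ^ e) -
          x 0 ^ ((t - 1) * p ^ e) * j) := by
    ring
  rw [hfinal]
  exact Submodule.add_mem_sup (Ideal.mem_span_singleton_mul.mpr ⟨j, hj, rfl⟩) hzP


end
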